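/- Fix k ∈ {1,...,K} and t ≥ 0, and define h_k^{(t)} := (1/M) Σ_{i=1}^{M} (H_i(x_{i,k}^{(t)}) − H_i(x̄_k^{(t)})), where H_i(x̄_k^{(t)}) is the local Sanger direction evaluated with k-th argument x̄_k^{(t)} and the same local vectors x_{i,p}^{(t)}, p < k. Suppose ‖x_{i,p}^{(t)}‖² ≤ 3 for every node i and every p ≤ k, ‖x̄_k^{(t)}‖² ≤ 3, and ‖x_{i,k}^{(t)} − x̄_k^{(t)}‖ ≤ b_k(β^t + α/(1−β)) for every node i, for some constant b_k > 0. Then ‖h_k^{(t)}‖ ≤ 3(k+2) λ_1 b_k (β^t + α/(1−β)). -/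

import Mathlib

open Matrix Finset

/-- Coerce a plain vector into `EuclideanSpace` (they are definitionally equal). -/
def toE {d : ℕ} (v : Fin d → ℝ) : EuclideanSpace ℝ (Fin d) := WithLp.toLp 2 v

/-- The local Sanger direction with `k`-th argument `u` and fixed lower-order vectors
`y 1, …, y (k−1)`:
`H(u) = C u − (uᵀ C u) u − Σ_{p=1}^{k−1} (y_pᵀ C u) y_p`. -/
noncomputable def sangerAt {d : ℕ} (C : Matrix (Fin d) (Fin d) ℝ)
    (y : ℕ → EuclideanSpace ℝ (Fin d)) (k : ℕ) (u : EuclideanSpace ℝ (Fin d)) :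
    EuclideanSpace ℝ (Fin d) :=
  toE (C.mulVec u) - (u ⬝ᵥ C.mulVec u) • u
    - ∑ p ∈ Finset.Icc 1 (k - 1), ((y p) ⬝ᵥ C.mulVec u) • y p

/- ------------------------------------------------------------------ -/
/- Auxiliary lemmas                                                    -/
/- ------------------------------------------------------------------ -/

lemma sumE_apply {d : ℕ} (s : Finset ℕ) (f : ℕ → EuclideanSpace ℝ (Fin d)) (j : Fin d) :
    (∑ p ∈ s, f p) j = ∑ p ∈ s, f p j := by
  classical
  induction s using Finset.induction with
  | empty => rfl
  | insert _ _ h ih => rw [Finset.sum_insert h, Finset.sum_insert h, PiLp.add_apply, ih]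

lemma mulVec_subE {d : ℕ} (A : Matrix (Fin d) (Fin d) ℝ) (x v : EuclideanSpace ℝ (Fin d)) :
    A.mulVec (x - v) = A.mulVec x - A.mulVec v := by
  funext i
  simp [Matrix.mulVec, dotProduct, PiLp.sub_apply, mul_sub, Finset.sum_sub_distrib]

lemma mulVec_addE {d : ℕ} (A : Matrix (Fin d) (Fin d) ℝ) (x v : EuclideanSpace ℝ (Fin d)) :
    A.mulVec (x + v) = A.mulVec x + A.mulVec v := by
  funext i
  simp [Matrix.mulVec, dotProduct, PiLp.add_apply, mul_add, Finset.sum_add_distrib]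

lemma dot_subE {d : ℕ} (x v : EuclideanSpace ℝ (Fin d)) (w : Fin d → ℝ) :
    (x - v) ⬝ᵥ w = x ⬝ᵥ w - v ⬝ᵥ w := by
  simp [dotProduct, PiLp.sub_apply, sub_mul, Finset.sum_sub_distrib]

/-- dot product equals the Euclidean inner product. -/
lemma dot_innerE {d : ℕ} (a : EuclideanSpace ℝ (Fin d)) (w : Fin d → ℝ) :
    (a : Fin d → ℝ) ⬝ᵥ w = inner (𝕜 := ℝ) a (toE w) := by
  simp [PiLp.inner_apply, RCLike.inner_apply, dotProduct, toE, mul_comm]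

lemma normE_sq {d : ℕ} (a : EuclideanSpace ℝ (Fin d)) :
    ‖a‖ ^ 2 = (a : Fin d → ℝ) ⬝ᵥ (a : Fin d → ℝ) := by
  rw [← real_inner_self_eq_norm_sq]
  exact (dot_innerE a a).symm

lemma le_of_sq_le' (a b : ℝ) (hb : 0 ≤ b) (h : a ^ 2 ≤ b ^ 2) (ha : 0 ≤ a) : a ≤ b := by
  nlinarith

/-- Cauchy–Schwarz in dot-product form. -/
lemma abs_dot_le {d : ℕ} (a : EuclideanSpace ℝ (Fin d)) (w : Fin d → ℝ) :
    |(a : Fin d → ℝ) ⬝ᵥ w| ≤ ‖a‖ * ‖toE w‖ := by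
  rw [dot_innerE]
  exact abs_real_inner_le_norm a (toE w)

/-- The algebraic decomposition of the difference of two Sanger directions. -/
lemma sanger_diff {d : ℕ} (A : Matrix (Fin d) (Fin d) ℝ) (hAt : Aᵀ = A)
    (y : ℕ → EuclideanSpace ℝ (Fin d)) (k : ℕ) (x v : EuclideanSpace ℝ (Fin d)) :
    sangerAt A y k x - sangerAt A y k v =
      (toE (A.mulVec (x - v)) - (x ⬝ᵥ A.mulVec x) • (x - v))
        - ((x - v) ⬝ᵥ A.mulVec (x + v)) • v
        - ∑ p ∈ Finset.Icc 1 (k - 1), ((y p) ⬝ᵥ A.mulVec (x - v)) • y p := by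
  have hsymm : (x : Fin d → ℝ) ⬝ᵥ A.mulVec v = (v : Fin d → ℝ) ⬝ᵥ A.mulVec x := by
    rw [Matrix.dotProduct_mulVec, ← Matrix.mulVec_transpose, hAt, dotProduct_comm]
  ext j
  simp only [sangerAt, toE, PiLp.toLp_apply, PiLp.sub_apply, PiLp.add_apply, PiLp.smul_apply,
    sumE_apply, smul_eq_mul, mulVec_subE, mulVec_addE, dot_subE,
    dotProduct_sub, dotProduct_add, Pi.sub_apply, Pi.add_apply,
    sub_mul, Finset.sum_sub_distrib]
  linear_combination (v j) * hsymm

/-- The key per-node Lipschitz-type bound on the Sanger direction. -/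
lemma sanger_lip {d : ℕ} (A : Matrix (Fin d) (Fin d) ℝ) (hA : A.PosSemidef)
    (L : ℝ) (hL : 0 ≤ L)
    (hQ : ∀ z : Fin d → ℝ, z ⬝ᵥ A.mulVec z ≤ L * (z ⬝ᵥ z))
    (y : ℕ → EuclideanSpace ℝ (Fin d)) (k : ℕ) (hk : 1 ≤ k)
    (x v : EuclideanSpace ℝ (Fin d))
    (hx : ‖x‖ ^ 2 ≤ 3) (hv : ‖v‖ ^ 2 ≤ 3)
    (hy : ∀ p, 1 ≤ p → p ≤ k - 1 → ‖y p‖ ^ 2 ≤ 3) :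
    ‖sangerAt A y k x - sangerAt A y k v‖ ≤ (3 * (k : ℝ) + 6) * (L * ‖x - v‖) := by
  have hAt : Aᵀ = A := hA.1
  have h0 : ∀ z : Fin d → ℝ, 0 ≤ z ⬝ᵥ A.mulVec z := by
    intro z; simpa using hA.dotProduct_mulVec_nonneg z
  -- transfer lemma for a symmetric matrix
  have htrans : ∀ (B : Matrix (Fin d) (Fin d) ℝ), Bᵀ = B →
      ∀ u w : Fin d → ℝ, (B.mulVec u) ⬝ᵥ w = u ⬝ᵥ (B.mulVec w) := by
    intro B hBt u w
    calc (B.mulVec u) ⬝ᵥ w = w ⬝ᵥ (B.mulVec u) := dotProduct_comm _ _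
      _ = (w ᵥ* B) ⬝ᵥ u := Matrix.dotProduct_mulVec w B u
      _ = (Bᵀ.mulVec w) ⬝ᵥ u := by rw [Matrix.mulVec_transpose]
      _ = (B.mulVec w) ⬝ᵥ u := by rw [hBt]
      _ = u ⬝ᵥ (B.mulVec w) := dotProduct_comm _ _
  -- ‖A z‖² ≤ L ⟨z, A z⟩
  have hAA : ∀ z : Fin d → ℝ, (A.mulVec z) ⬝ᵥ (A.mulVec z) ≤ L * (z ⬝ᵥ A.mulVec z) := by
    intro z
    obtain ⟨B, hBt, hBB⟩ : ∃ B : Matrix (Fin d) (Fin d) ℝ, Bᵀ = B ∧ B * B = A := by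
      open scoped MatrixOrder in
      exact ⟨CFC.sqrt A, (CFC.sqrt_nonneg A).posSemidef.1, CFC.sqrt_mul_sqrt_self A hA.nonneg⟩
    have h1 : A.mulVec z = B.mulVec (B.mulVec z) := by
      rw [Matrix.mulVec_mulVec, hBB]
    have hcomm : B * A = A * B := by rw [← hBB, Matrix.mul_assoc]
    calc (A.mulVec z) ⬝ᵥ (A.mulVec z)
        = (B.mulVec (B.mulVec z)) ⬝ᵥ (A.mulVec z) := by rw [← h1]
      _ = (B.mulVec z) ⬝ᵥ (B.mulVec (A.mulVec z)) := htrans B hBt _ _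
      _ = (B.mulVec z) ⬝ᵥ (A.mulVec (B.mulVec z)) := by
          rw [Matrix.mulVec_mulVec, Matrix.mulVec_mulVec, hcomm]
      _ ≤ L * ((B.mulVec z) ⬝ᵥ (B.mulVec z)) := hQ _
      _ = L * (z ⬝ᵥ (B.mulVec (B.mulVec z))) := by rw [htrans B hBt]
      _ = L * (z ⬝ᵥ A.mulVec z) := by rw [← h1]
  -- operator-norm type bound
  have hop : ∀ z : Fin d → ℝ, ‖toE (A.mulVec z)‖ ≤ L * ‖toE z‖ := by
    intro z
    apply le_of_sq_le' _ _ (by positivity) _ (norm_nonneg _)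
    have h1 : ‖toE (A.mulVec z)‖ ^ 2 = (A.mulVec z) ⬝ᵥ (A.mulVec z) := normE_sq (toE (A.mulVec z))
    have h2 : ‖toE z‖ ^ 2 = z ⬝ᵥ z := normE_sq (toE z)
    have h3 := hAA z
    have h4 := hQ z
    have h6 : (A.mulVec z) ⬝ᵥ (A.mulVec z) ≤ L * (L * (z ⬝ᵥ z)) :=
      le_trans h3 (mul_le_mul_of_nonneg_left h4 hL)
    calc ‖toE (A.mulVec z)‖ ^ 2 = (A.mulVec z) ⬝ᵥ (A.mulVec z) := h1
      _ ≤ L * (L * (z ⬝ᵥ z)) := h6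
      _ = (L * ‖toE z‖) ^ 2 := by rw [mul_pow, h2]; ring
  set e : EuclideanSpace ℝ (Fin d) := x - v with he
  have hxn : ‖x‖ ≤ Real.sqrt 3 := by
    rw [show (3:ℝ) = Real.sqrt 3 ^ 2 by rw [Real.sq_sqrt]; norm_num] at hx
    exact le_of_sq_le' _ _ (Real.sqrt_nonneg 3) hx (norm_nonneg _)
  have hvn : ‖v‖ ≤ Real.sqrt 3 := by
    rw [show (3:ℝ) = Real.sqrt 3 ^ 2 by rw [Real.sq_sqrt]; norm_num] at hv
    exact le_of_sq_le' _ _ (Real.sqrt_nonneg 3) hv (norm_nonneg _)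
  -- term 1
  have hT1 : ‖toE (A.mulVec e) - (x ⬝ᵥ A.mulVec x) • e‖ ≤ 3 * L * ‖e‖ := by
    set c : ℝ := (x : Fin d → ℝ) ⬝ᵥ A.mulVec x with hc
    have hc0 : 0 ≤ c := h0 x
    have hc3 : c ≤ 3 * L := by
      have := hQ x
      have hxx : (x : Fin d → ℝ) ⬝ᵥ (x : Fin d → ℝ) = ‖x‖ ^ 2 := (normE_sq x).symm
      nlinarith
    apply le_of_sq_le' _ _ (by positivity) _ (norm_nonneg _)
    have hsq : ‖toE (A.mulVec e) - c • e‖ ^ 2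
        = ‖toE (A.mulVec e)‖ ^ 2 - 2 * (c * ((e : Fin d → ℝ) ⬝ᵥ A.mulVec e))
          + c ^ 2 * ‖e‖ ^ 2 := by
      rw [norm_sub_sq_real, real_inner_smul_right, norm_smul]
      have : inner (𝕜 := ℝ) (toE (A.mulVec e)) e
          = (e : Fin d → ℝ) ⬝ᵥ A.mulVec e := by
        rw [real_inner_comm]
        exact (dot_innerE e (A.mulVec e)).symm
      rw [this, mul_pow, Real.norm_eq_abs, sq_abs]
    have h1 : ‖toE (A.mulVec e)‖ ^ 2 = (A.mulVec e) ⬝ᵥ (A.mulVec e) := normE_sq (toE (A.mulVec e))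
    have h2 : ‖e‖ ^ 2 = (e : Fin d → ℝ) ⬝ᵥ (e : Fin d → ℝ) := normE_sq _
    set s₀ : ℝ := (e : Fin d → ℝ) ⬝ᵥ A.mulVec e with hs₀
    have hs0 : 0 ≤ s₀ := h0 e
    have hsLr : s₀ ≤ L * ((e : Fin d → ℝ) ⬝ᵥ (e : Fin d → ℝ)) := hQ e
    have hn : (A.mulVec e) ⬝ᵥ (A.mulVec e) ≤ L * s₀ := hAA e
    have hr0 : 0 ≤ (e : Fin d → ℝ) ⬝ᵥ (e : Fin d → ℝ) := by rw [← h2]; positivity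
    have hgoal : (3 * L * ‖e‖) ^ 2 = 9 * L ^ 2 * ((e : Fin d → ℝ) ⬝ᵥ (e : Fin d → ℝ)) := by
      rw [mul_pow, mul_pow, h2]; ring
    rw [hsq, h1, hgoal, h2]
    set r : ℝ := (e : Fin d → ℝ) ⬝ᵥ (e : Fin d → ℝ)
    rcases le_total (2 * c) L with hcase | hcase
    · nlinarith [mul_nonneg (sub_nonneg.2 hsLr) (sub_nonneg.2 hcase),
        mul_nonneg hr0 (mul_nonneg (sub_nonneg.2 hc3) (by linarith : (0:ℝ) ≤ L + c)),
        mul_nonneg hr0 (mul_nonneg hL hL)]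
    · nlinarith [mul_nonneg (sub_nonneg.2 hcase) hs0,
        mul_nonneg hr0 (mul_nonneg (sub_nonneg.2 hc3) (by linarith : (0:ℝ) ≤ 3 * L + c))]
  -- term 2
  have hT2 : ‖((e : Fin d → ℝ) ⬝ᵥ A.mulVec (x + v)) • v‖ ≤ 6 * L * ‖e‖ := by
    rw [norm_smul, Real.norm_eq_abs]
    have h1 : |(e : Fin d → ℝ) ⬝ᵥ A.mulVec (x + v)| ≤ ‖e‖ * (L * ‖x + v‖) := by
      calc |(e : Fin d → ℝ) ⬝ᵥ A.mulVec (x + v)| ≤ ‖e‖ * ‖toE (A.mulVec (x + v))‖ :=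
            abs_dot_le e _
        _ ≤ ‖e‖ * (L * ‖toE ((x + v : EuclideanSpace ℝ (Fin d)) : Fin d → ℝ)‖) := by
            have := hop ((x + v : EuclideanSpace ℝ (Fin d)) : Fin d → ℝ)
            exact mul_le_mul_of_nonneg_left this (norm_nonneg _)
        _ = ‖e‖ * (L * ‖x + v‖) := rfl
    have h2 : ‖x + v‖ ≤ 2 * Real.sqrt 3 := by
      calc ‖x + v‖ ≤ ‖x‖ + ‖v‖ := norm_add_le x v
        _ ≤ 2 * Real.sqrt 3 := by linarith
    have h3 : (0:ℝ) ≤ ‖e‖ := norm_nonneg _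
    have h5 : Real.sqrt 3 * Real.sqrt 3 = 3 := Real.mul_self_sqrt (by norm_num)
    have h4 : |(e : Fin d → ℝ) ⬝ᵥ A.mulVec (x + v)| * ‖v‖
        ≤ (‖e‖ * (L * (2 * Real.sqrt 3))) * Real.sqrt 3 := by
      apply mul_le_mul _ hvn (norm_nonneg _) (by positivity)
      calc |(e : Fin d → ℝ) ⬝ᵥ A.mulVec (x + v)| ≤ ‖e‖ * (L * ‖x + v‖) := h1
        _ ≤ ‖e‖ * (L * (2 * Real.sqrt 3)) := by
            apply mul_le_mul_of_nonneg_left _ h3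
            exact mul_le_mul_of_nonneg_left h2 hL
    calc |(e : Fin d → ℝ) ⬝ᵥ A.mulVec (x + v)| * ‖v‖
        ≤ (‖e‖ * (L * (2 * Real.sqrt 3))) * Real.sqrt 3 := h4
      _ = 6 * L * ‖e‖ := by rw [show (‖e‖ * (L * (2 * Real.sqrt 3))) * Real.sqrt 3
            = 2 * (Real.sqrt 3 * Real.sqrt 3) * L * ‖e‖ by ring, h5]; ring
  -- term 3
  have hT3 : ‖∑ p ∈ Finset.Icc 1 (k - 1), ((y p) ⬝ᵥ A.mulVec e) • y p‖
      ≤ ((k : ℝ) - 1) * (3 * L * ‖e‖) := by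
    calc ‖∑ p ∈ Finset.Icc 1 (k - 1), ((y p) ⬝ᵥ A.mulVec e) • y p‖
        ≤ ∑ p ∈ Finset.Icc 1 (k - 1), ‖((y p) ⬝ᵥ A.mulVec e) • y p‖ :=
          norm_sum_le _ _
      _ ≤ ∑ p ∈ Finset.Icc 1 (k - 1), (3 * L * ‖e‖) := by
          apply Finset.sum_le_sum
          intro p hp
          rw [Finset.mem_Icc] at hp
          have hyp := hy p hp.1 hp.2
          have hypn : ‖y p‖ ≤ Real.sqrt 3 := by
            rw [show (3:ℝ) = Real.sqrt 3 ^ 2 by rw [Real.sq_sqrt]; norm_num] at hyp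
            exact le_of_sq_le' _ _ (Real.sqrt_nonneg 3) hyp (norm_nonneg _)
          rw [norm_smul, Real.norm_eq_abs]
          have h1 : |(y p) ⬝ᵥ A.mulVec e| ≤ ‖y p‖ * (L * ‖e‖) := by
            calc |(y p) ⬝ᵥ A.mulVec e| ≤ ‖y p‖ * ‖toE (A.mulVec e)‖ := abs_dot_le _ _
              _ ≤ ‖y p‖ * (L * ‖e‖) := by
                  have := hop ((e : EuclideanSpace ℝ (Fin d)) : Fin d → ℝ)
                  exact mul_le_mul_of_nonneg_left this (norm_nonneg _)
          have h2 : |(y p) ⬝ᵥ A.mulVec e| * ‖y p‖ ≤ (‖y p‖ * (L * ‖e‖)) * ‖y p‖ :=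
            mul_le_mul_of_nonneg_right h1 (norm_nonneg _)
          have h3 : (‖y p‖ * (L * ‖e‖)) * ‖y p‖ ≤ 3 * L * ‖e‖ := by
            have hLe : 0 ≤ L * ‖e‖ := by positivity
            nlinarith [norm_nonneg (y p)]
          linarith
      _ = ((k : ℝ) - 1) * (3 * L * ‖e‖) := by
          rw [Finset.sum_const, Nat.card_Icc]
          simp only [nsmul_eq_mul]
          congr 1
          have : k - 1 + 1 - 1 = k - 1 := by omega
          rw [this, Nat.cast_sub hk]
          norm_num
  -- combine
  have hdecomp := sanger_diff A hAt y k x v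
  rw [hdecomp]
  have htri : ‖(toE (A.mulVec e) - (x ⬝ᵥ A.mulVec x) • e)
        - ((e : Fin d → ℝ) ⬝ᵥ A.mulVec (x + v)) • v
        - ∑ p ∈ Finset.Icc 1 (k - 1), ((y p) ⬝ᵥ A.mulVec e) • y p‖
      ≤ ‖toE (A.mulVec e) - (x ⬝ᵥ A.mulVec x) • e‖
        + ‖((e : Fin d → ℝ) ⬝ᵥ A.mulVec (x + v)) • v‖
        + ‖∑ p ∈ Finset.Icc 1 (k - 1), ((y p) ⬝ᵥ A.mulVec e) • y p‖ := by
    calc _ ≤ ‖(toE (A.mulVec e) - (x ⬝ᵥ A.mulVec x) • e)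
            - ((e : Fin d → ℝ) ⬝ᵥ A.mulVec (x + v)) • v‖
          + ‖∑ p ∈ Finset.Icc 1 (k - 1), ((y p) ⬝ᵥ A.mulVec e) • y p‖ := norm_sub_le _ _
      _ ≤ _ := by
          have := norm_sub_le (toE (A.mulVec e) - (x ⬝ᵥ A.mulVec x) • e)
            (((e : Fin d → ℝ) ⬝ᵥ A.mulVec (x + v)) • v)
          linarith
  have hk1 : (1 : ℝ) ≤ (k : ℝ) := by exact_mod_cast hk
  calc _ ≤ _ := htri
    _ ≤ 3 * L * ‖e‖ + 6 * L * ‖e‖ + ((k : ℝ) - 1) * (3 * L * ‖e‖) := by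
        linarith
    _ = (3 * (k : ℝ) + 6) * (L * ‖e‖) := by ring

/-- Spectral bound: the quadratic form of `C` is at most `lam 1` times the squared norm. -/
lemma quad_bound {d : ℕ} (C : Matrix (Fin d) (Fin d) ℝ)
    (lam : ℕ → ℝ) (q : ℕ → EuclideanSpace ℝ (Fin d))
    (horth : ∀ l l', 1 ≤ l → l ≤ d → 1 ≤ l' → l' ≤ d →
      (q l) ⬝ᵥ (q l' : Fin d → ℝ) = if l = l' then 1 else 0)
    (heig : ∀ l, 1 ≤ l → l ≤ d → C.mulVec (q l) = lam l • (q l : Fin d → ℝ))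
    (hmono : ∀ l l', 1 ≤ l → l ≤ l' → l' ≤ d → lam l' ≤ lam l)
    (z : Fin d → ℝ) :
    z ⬝ᵥ C.mulVec z ≤ lam 1 * (z ⬝ᵥ z) := by
  classical
  rcases Nat.eq_zero_or_pos d with hd | hd
  · subst hd
    simp [dotProduct]
  set Q : Matrix (Fin d) (Fin d) ℝ := Matrix.of (fun l i => (q (l.1 + 1) : Fin d → ℝ) i)
    with hQdef
  have hQQt : Q * Qᵀ = 1 := by
    ext l l'
    rw [Matrix.mul_apply, Matrix.one_apply]
    have : ∑ i, Q l i * Qᵀ i l' = (q (l.1 + 1)) ⬝ᵥ (q (l'.1 + 1) : Fin d → ℝ) := by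
      simp [hQdef, dotProduct, Matrix.transpose_apply]
    rw [this, horth (l.1 + 1) (l'.1 + 1) (by omega) (by omega) (by omega) (by omega)]
    by_cases h : l = l'
    · simp [h]
    · have : ¬ (l.1 + 1 = l'.1 + 1) := by
        intro hc; exact h (Fin.ext (by omega))
      simp [h, this, Fin.val_inj]
  have hQtQ : Qᵀ * Q = 1 := mul_eq_one_comm.mp hQQt
  set D : Matrix (Fin d) (Fin d) ℝ := Matrix.diagonal (fun l : Fin d => lam (l.1 + 1))
    with hDdef
  have hCQ : C * Qᵀ = Qᵀ * D := by
    ext i l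
    have hL : (C * Qᵀ) i l = (C.mulVec (q (l.1 + 1))) i := by
      simp [Matrix.mul_apply, Matrix.mulVec, dotProduct, hQdef, Matrix.transpose_apply]
    have hR : (Qᵀ * D) i l = lam (l.1 + 1) * (q (l.1 + 1) : Fin d → ℝ) i := by
      simp [Matrix.mul_apply, hDdef, Matrix.diagonal_apply, Matrix.transpose_apply, hQdef,
        Finset.sum_ite_eq, mul_comm]
    rw [hL, hR, heig (l.1 + 1) (by omega) (by omega)]
    simp [mul_comm]
  have hC : C = Qᵀ * D * Q := by
    calc C = C * (Qᵀ * Q) := by rw [hQtQ, Matrix.mul_one]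
      _ = (C * Qᵀ) * Q := by rw [Matrix.mul_assoc]
      _ = Qᵀ * D * Q := by rw [hCQ]
  set w : Fin d → ℝ := Q.mulVec z with hw
  have htrans : ∀ u : Fin d → ℝ, z ⬝ᵥ (Qᵀ.mulVec u) = w ⬝ᵥ u := by
    intro u
    rw [Matrix.dotProduct_mulVec, Matrix.vecMul_transpose]
  have hquad : z ⬝ᵥ C.mulVec z = w ⬝ᵥ D.mulVec w := by
    rw [hC]
    rw [show (Qᵀ * D * Q).mulVec z = Qᵀ.mulVec (D.mulVec (Q.mulVec z)) by
      rw [Matrix.mulVec_mulVec, Matrix.mulVec_mulVec]]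
    exact htrans _
  have hnorm : z ⬝ᵥ z = w ⬝ᵥ w := by
    have : w ⬝ᵥ w = z ⬝ᵥ (Qᵀ.mulVec w) := (htrans w).symm
    rw [this, hw, Matrix.mulVec_mulVec, hQtQ, Matrix.one_mulVec]
  rw [hquad, hnorm]
  have hDw : D.mulVec w = fun l => lam (l.1 + 1) * w l := by
    funext l
    simp [hDdef, Matrix.mulVec_diagonal]
  rw [hDw]
  calc w ⬝ᵥ (fun l => lam (l.1 + 1) * w l) = ∑ l, lam (l.1 + 1) * (w l * w l) := by
        simp [dotProduct]; apply Finset.sum_congr rfl; intro l _; ring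
    _ ≤ ∑ l, lam 1 * (w l * w l) := by
        apply Finset.sum_le_sum
        intro l _
        exact mul_le_mul_of_nonneg_right (hmono 1 (l.1 + 1) le_rfl (by omega) (by omega))
          (mul_self_nonneg _)
    _ = lam 1 * (w ⬝ᵥ w) := by rw [dotProduct, Finset.mul_sum]

/-- Lemma 10 of the paper: the averaged perturbation
`h_k^{(t)} = (1/M) Σᵢ (H_i(x_{i,k}^{(t)}) − H_i(x̄_k^{(t)}))` satisfies
`‖h_k^{(t)}‖ ≤ 3(k+2) λ₁ b_k (β^t + α/(1−β))`. -/
theorem DSA_average_perturbation_bound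
    (M d K : ℕ) (hM : 0 < M) (hK1 : 1 ≤ K) (hKd : K < d)
    -- the symmetric doubly stochastic weight matrix
    (W : Matrix (Fin M) (Fin M) ℝ) (hWsymm : W.IsSymm)
    (hWnonneg : ∀ i j, 0 ≤ W i j) (hWrow : ∀ i, ∑ j, W i j = 1)
    (hWdiag : ∀ i, 0 < W i i)
    (β : ℝ) (hβ0 : 0 ≤ β) (hβ1 : β < 1)
    (hβ : ‖(Matrix.toEuclideanCLM (𝕜 := ℝ)
        (W - (M : ℝ)⁻¹ • Matrix.of (fun _ _ => (1:ℝ))) :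
      EuclideanSpace ℝ (Fin M) →L[ℝ] EuclideanSpace ℝ (Fin M))‖ = β)
    -- local and global covariance matrices
    (Cl : Fin M → Matrix (Fin d) (Fin d) ℝ) (hCl : ∀ i, (Cl i).PosSemidef)
    (C : Matrix (Fin d) (Fin d) ℝ) (hCsum : C = ∑ i, Cl i)
    -- eigendecomposition of the global covariance matrix, indexed `1, …, d`
    (lam : ℕ → ℝ) (q : ℕ → EuclideanSpace ℝ (Fin d))
    (horth : ∀ l l', 1 ≤ l → l ≤ d → 1 ≤ l' → l' ≤ d →
      (q l) ⬝ᵥ (q l' : Fin d → ℝ) = if l = l' then 1 else 0)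
    (heig : ∀ l, 1 ≤ l → l ≤ d → C.mulVec (q l) = lam l • (q l : Fin d → ℝ))
    (hstrict : ∀ l l', 1 ≤ l → l < l' → l' ≤ d → l ≤ K → lam l' < lam l)
    (hmono : ∀ l l', 1 ≤ l → l ≤ l' → l' ≤ d → lam l' ≤ lam l)
    (hnonneg : ∀ l, 1 ≤ l → l ≤ d → 0 ≤ lam l)
    (hKpos : 0 < lam K)
    -- the largest eigenvalue of each `C_i` is at most `λ₁`
    (hClLam : ∀ i μ, Module.End.HasEigenvalue (Matrix.toEuclideanLin (Cl i)) μ → μ ≤ lam 1)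
    (α : ℝ) (hα : 0 < α)
    -- the vectors held at the nodes at iteration `t`, and the network average
    (x : Fin M → ℕ → ℕ → EuclideanSpace ℝ (Fin d))
    (k : ℕ) (hk1 : 1 ≤ k) (hkK : k ≤ K) (t : ℕ)
    (xbar : EuclideanSpace ℝ (Fin d)) (hxbar : xbar = (M : ℝ)⁻¹ • ∑ i, x i k t)
    (hxb : ∀ (i : Fin M) (p : ℕ), 1 ≤ p → p ≤ k → ‖x i p t‖ ^ 2 ≤ 3)
    (hxbarb : ‖xbar‖ ^ 2 ≤ 3)
    (bk : ℝ) (hbk : 0 < bk)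
    (hdev : ∀ i : Fin M, ‖x i k t - xbar‖ ≤ bk * (β ^ t + α / (1 - β))) :
    ‖(M : ℝ)⁻¹ • ∑ i, (sangerAt (Cl i) (fun p => x i p t) k (x i k t)
        - sangerAt (Cl i) (fun p => x i p t) k xbar)‖ ≤
      3 * ((k : ℝ) + 2) * lam 1 * bk * (β ^ t + α / (1 - β)) := by
  -- positivity facts
  have hL0 : 0 ≤ lam 1 := by
    have h1 : lam K ≤ lam 1 := hmono 1 K le_rfl hK1 (le_of_lt hKd)
    linarith
  have hδ0 : 0 ≤ β ^ t + α / (1 - β) := by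
    have h1 : 0 ≤ β ^ t := pow_nonneg hβ0 t
    have h2 : 0 ≤ α / (1 - β) := le_of_lt (div_pos hα (by linarith))
    linarith
  set δ : ℝ := β ^ t + α / (1 - β) with hδ
  -- quadratic form bound for each local matrix
  have hQi : ∀ (i : Fin M) (z : Fin d → ℝ),
      z ⬝ᵥ (Cl i).mulVec z ≤ lam 1 * (z ⬝ᵥ z) := by
    intro i z
    have h1 : z ⬝ᵥ (Cl i).mulVec z ≤ z ⬝ᵥ C.mulVec z := by
      have hmv : (∑ j, Cl j).mulVec z = ∑ j, (Cl j).mulVec z := by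
        funext i
        simp only [Matrix.mulVec, dotProduct, Matrix.sum_apply, Finset.sum_mul,
          Finset.sum_apply]
        exact Finset.sum_comm
      have hexp : z ⬝ᵥ C.mulVec z = ∑ j, z ⬝ᵥ (Cl j).mulVec z := by
        rw [hCsum, hmv]
        simp only [dotProduct, Finset.mul_sum, Finset.sum_apply]
        exact Finset.sum_comm
      rw [hexp]
      exact Finset.single_le_sum
        (f := fun j => z ⬝ᵥ (Cl j).mulVec z)
        (fun j _ => by simpa using (hCl j).dotProduct_mulVec_nonneg z) (Finset.mem_univ i)
    have h2 := quad_bound C lam q horth heig hmono z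
    linarith
  -- per-node bound
  have hnode : ∀ i : Fin M,
      ‖sangerAt (Cl i) (fun p => x i p t) k (x i k t)
        - sangerAt (Cl i) (fun p => x i p t) k xbar‖
      ≤ (3 * (k : ℝ) + 6) * (lam 1 * (bk * δ)) := by
    intro i
    have hlip := sanger_lip (Cl i) (hCl i) (lam 1) hL0 (hQi i)
      (fun p => x i p t) k hk1 (x i k t) xbar
      (hxb i k hk1 le_rfl) hxbarb
      (fun p hp1 hp2 => hxb i p hp1 (by omega))
    have hd := hdev i
    calc ‖sangerAt (Cl i) (fun p => x i p t) k (x i k t)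
          - sangerAt (Cl i) (fun p => x i p t) k xbar‖
        ≤ (3 * (k : ℝ) + 6) * (lam 1 * ‖x i k t - xbar‖) := hlip
      _ ≤ (3 * (k : ℝ) + 6) * (lam 1 * (bk * δ)) := by
          apply mul_le_mul_of_nonneg_left _ (by positivity)
          exact mul_le_mul_of_nonneg_left hd hL0
  -- average
  have hsum : ‖∑ i, (sangerAt (Cl i) (fun p => x i p t) k (x i k t)
        - sangerAt (Cl i) (fun p => x i p t) k xbar)‖
      ≤ (M : ℝ) * ((3 * (k : ℝ) + 6) * (lam 1 * (bk * δ))) := by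
    calc ‖∑ i, (sangerAt (Cl i) (fun p => x i p t) k (x i k t)
          - sangerAt (Cl i) (fun p => x i p t) k xbar)‖
        ≤ ∑ i : Fin M, ‖sangerAt (Cl i) (fun p => x i p t) k (x i k t)
            - sangerAt (Cl i) (fun p => x i p t) k xbar‖ := norm_sum_le _ _
      _ ≤ ∑ _i : Fin M, ((3 * (k : ℝ) + 6) * (lam 1 * (bk * δ))) :=
          Finset.sum_le_sum (fun i _ => hnode i)
      _ = (M : ℝ) * ((3 * (k : ℝ) + 6) * (lam 1 * (bk * δ))) := by
          rw [Finset.sum_const, Finset.card_univ, Fintype.card_fin, nsmul_eq_mul]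
  rw [norm_smul, Real.norm_eq_abs, abs_inv, Nat.abs_cast]
  have hMpos : (0:ℝ) < (M : ℝ) := by exact_mod_cast hM
  calc ((M:ℝ))⁻¹ * ‖∑ i, (sangerAt (Cl i) (fun p => x i p t) k (x i k t)
        - sangerAt (Cl i) (fun p => x i p t) k xbar)‖
      ≤ ((M:ℝ))⁻¹ * ((M : ℝ) * ((3 * (k : ℝ) + 6) * (lam 1 * (bk * δ)))) := by
        apply mul_le_mul_of_nonneg_left hsum (by positivity)
    _ = (3 * (k : ℝ) + 6) * (lam 1 * (bk * δ)) := by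
        field_simp
    _ = 3 * ((k : ℝ) + 2) * lam 1 * bk * δ := by ring
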